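/- Fix n ≥ 1 and a measurable estimator θ̂ : ℝⁿ → ℝ. For each Δ > 0, let P₊^Δ be the n-fold product of N(Δ,1) and P₋^Δ the n-fold product of N(−Δ,1), and define L₊^Δ(y) = min(|θ̂(y) − Δ|, 2Δ) and L₋^Δ(y) = min(|θ̂(y) + Δ|, 2Δ). Then for every α ∈ [0,1): sup_{Δ > 0} inf_{t ∈ ℝ} { t + (1/(1−α))·(½∫(L₊^Δ−t)₊ dP₊^Δ + ½∫(L₋^Δ−t)₊ dP₋^Δ) } ≥ c_α/√n, where c_α = 2/(27(1−α)) for 0 ≤ α ≤ 1/3 and c_α = √α/(3√3) for 1/3 ≤ α < 1. -/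

import Mathlib

set_option maxHeartbeats 1000000

open MeasureTheory ProbabilityTheory Real

open scoped ENNReal NNReal

/-- The optimized constant `c_α`. -/
noncomputable def cAlpha (α : ℝ) : ℝ :=
  if α ≤ 1 / 3 then 2 / (27 * (1 - α)) else Real.sqrt α / (3 * Real.sqrt 3)

lemma lintegral_pi_prod {n : ℕ} (ν : Measure ℝ) [SigmaFinite ν] (f : Fin n → ℝ → ℝ≥0∞)
    (hf : ∀ i, Measurable (f i)) :
    ∫⁻ y, ∏ i, f i (y i) ∂(Measure.pi fun _ : Fin n => ν) = ∏ i, ∫⁻ x, f i x ∂ν := by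
  induction n with
  | zero => simp
  | succ n ih =>
    have h := (measurePreserving_piFinSuccAbove (fun _ : Fin (n+1) => ν) 0)
    have hmap : ((ν.prod (Measure.pi fun _ : Fin n => ν)) : Measure (ℝ × (Fin n → ℝ)))
        = Measure.map (MeasurableEquiv.piFinSuccAbove (fun _ : Fin (n+1) => ℝ) 0)
          (Measure.pi fun _ : Fin (n+1) => ν) := h.map_eq.symm
    have key : ∫⁻ z : ℝ × (Fin n → ℝ), f 0 z.1 * ∏ i : Fin n, f i.succ (z.2 i)
        ∂(ν.prod (Measure.pi fun _ : Fin n => ν))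
        = ∫⁻ y, ∏ i, f i (y i) ∂(Measure.pi fun _ : Fin (n+1) => ν) := by
      rw [hmap, lintegral_map_equiv]
      congr 1
      ext y
      rw [Fin.prod_univ_succ]
      rfl
    have hg : Measurable fun w : Fin n → ℝ => ∏ i, f i.succ (w i) :=
      Finset.measurable_prod Finset.univ (fun i _ => (hf i.succ).comp (measurable_pi_apply i))
    have h2 := lintegral_prod_mul (μ := ν) (ν := Measure.pi fun _ : Fin n => ν)
      (f := f 0) (g := fun w : Fin n → ℝ => ∏ i, f i.succ (w i))
      (hf 0).aemeasurable hg.aemeasurable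
    rw [← key, Fin.prod_univ_succ, ← ih _ (fun i => hf i.succ)]
    exact h2

lemma pi_gaussian_eq (n : ℕ) (m : ℝ) :
    Measure.pi (fun _ : Fin n => gaussianReal m 1) =
      (volume : Measure (Fin n → ℝ)).withDensity (fun y => ∏ i, gaussianPDF m 1 (y i)) := by
  refine Measure.pi_eq (fun s hs => ?_)
  rw [withDensity_apply _ (MeasurableSet.univ_pi hs)]
  have : ∀ y : Fin n → ℝ, (Set.univ.pi s).indicator (fun y => ∏ i, gaussianPDF m 1 (y i)) y
      = ∏ i, (s i).indicator (gaussianPDF m 1) (y i) := by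
    intro y
    by_cases hy : y ∈ Set.univ.pi s
    · rw [Set.indicator_of_mem hy]
      exact Finset.prod_congr rfl fun i _ =>
        (Set.indicator_of_mem (hy i (Set.mem_univ i)) _).symm
    · rw [Set.indicator_of_notMem hy]
      rw [Set.mem_univ_pi] at hy
      push_neg at hy
      obtain ⟨i, hi⟩ := hy
      exact (Finset.prod_eq_zero (Finset.mem_univ i)
        (Set.indicator_of_notMem hi _)).symm
  rw [← lintegral_indicator (MeasurableSet.univ_pi hs) (fun y => ∏ i, gaussianPDF m 1 (y i))]
  simp_rw [this]
  rw [volume_pi, lintegral_pi_prod _ _ (fun i => (measurable_gaussianPDF m 1).indicator (hs i))]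
  refine Finset.prod_congr rfl fun i _ => ?_
  rw [lintegral_indicator (hs i), gaussianReal_apply m one_ne_zero]

lemma integral_pi_gaussian (n : ℕ) (m : ℝ) (f : (Fin n → ℝ) → ℝ) :
    ∫ y, f y ∂(Measure.pi fun _ : Fin n => gaussianReal m 1)
      = ∫ y, (∏ i, gaussianPDFReal m 1 (y i)) * f y := by
  rw [pi_gaussian_eq]
  have hd : (fun y : Fin n → ℝ => ∏ i, gaussianPDF m 1 (y i))
      = fun y => ((∏ i, (gaussianPDFReal m 1 (y i)).toNNReal : ℝ≥0) : ℝ≥0∞) := by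
    ext y
    rw [ENNReal.coe_finset_prod]
    rfl
  have hmeas : Measurable fun y : Fin n → ℝ => ∏ i, (gaussianPDFReal m 1 (y i)).toNNReal := by
    exact Finset.measurable_prod Finset.univ fun i _ =>
      (((measurable_gaussianPDFReal m 1).comp (measurable_pi_apply i))).real_toNNReal
  rw [hd, integral_withDensity_eq_integral_smul hmeas f]
  congr 1
  ext y
  rw [NNReal.smul_def, NNReal.coe_prod]
  simp_rw [Real.coe_toNNReal _ (gaussianPDFReal_nonneg m 1 _)]
  rfl

lemma pdf_sq (m x : ℝ) : gaussianPDFReal m 1 x ^ 2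
    = (Real.exp (m^2) * gaussianPDFReal (2*m) 1 x) * gaussianPDFReal 0 1 x := by
  simp only [gaussianPDFReal, NNReal.coe_one, mul_one]
  trans ((√(2*π))⁻¹ * (√(2*π))⁻¹ * Real.exp (-(x - m)^2/2 + -(x - m)^2/2))
  · rw [Real.exp_add]; ring
  trans ((√(2*π))⁻¹ * (√(2*π))⁻¹ * Real.exp (m^2 + (-(x - 2*m)^2/2 + -(x - 0)^2/2)))
  · congr 1; ring
  · rw [Real.exp_add, Real.exp_add]; ring

lemma pdf_mul_neg (m x : ℝ) : gaussianPDFReal m 1 x * gaussianPDFReal (-m) 1 x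
    = (Real.exp (-m^2) * gaussianPDFReal 0 1 x) * gaussianPDFReal 0 1 x := by
  simp only [gaussianPDFReal, NNReal.coe_one, mul_one]
  trans ((√(2*π))⁻¹ * (√(2*π))⁻¹ * Real.exp (-(x - m)^2/2 + -(x - -m)^2/2))
  · rw [Real.exp_add]; ring
  trans ((√(2*π))⁻¹ * (√(2*π))⁻¹ * Real.exp (-m^2 + (-(x - 0)^2/2 + -(x - 0)^2/2)))
  · congr 1; ring
  · rw [Real.exp_add, Real.exp_add]; ring

-- integral and integrability of dilated pdf products
lemma integrable_cpdf (c m : ℝ) : Integrable (fun x : ℝ => Real.exp c * gaussianPDFReal m 1 x) :=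
  (integrable_gaussianPDFReal m 1).const_mul _

lemma integrable_prod_cpdf {n : ℕ} (c m : ℝ) :
    Integrable (fun y : Fin n → ℝ => ∏ i, Real.exp c * gaussianPDFReal m 1 (y i)) :=
  Integrable.fintype_prod (𝕜 := ℝ) (fun _ => integrable_cpdf c m)

lemma integral_prod_cpdf {n : ℕ} (c m : ℝ) :
    ∫ y : Fin n → ℝ, ∏ i, Real.exp c * gaussianPDFReal m 1 (y i) = Real.exp (n * c) := by
  rw [volume_pi, integral_fintype_prod_eq_pow (fun x => Real.exp c * gaussianPDFReal m 1 x)]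
  rw [integral_const_mul, integral_gaussianPDFReal_eq_one m one_ne_zero]
  rw [mul_one, ← Real.exp_nat_mul]
  simp

lemma integrable_prod_pdf {n : ℕ} (m : ℝ) :
    Integrable (fun y : Fin n → ℝ => ∏ i, gaussianPDFReal m 1 (y i)) :=
  Integrable.fintype_prod (𝕜 := ℝ) (fun _ => integrable_gaussianPDFReal m 1)

lemma integral_prod_pdf {n : ℕ} (m : ℝ) :
    ∫ y : Fin n → ℝ, ∏ i, gaussianPDFReal m 1 (y i) = 1 := by
  rw [volume_pi, integral_fintype_prod_eq_pow (fun x => gaussianPDFReal m 1 x),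
    integral_gaussianPDFReal_eq_one m one_ne_zero, one_pow]

lemma meas_prod_pdf {n : ℕ} (m : ℝ) :
    Measurable (fun y : Fin n → ℝ => ∏ i, gaussianPDFReal m 1 (y i)) :=
  Finset.measurable_prod _ fun i _ =>
    (measurable_gaussianPDFReal m 1).comp (measurable_pi_apply i)

lemma overlap_bound (n : ℕ) (Δ : ℝ) (S : Set (Fin n → ℝ)) (hS : MeasurableSet S) :
    1 - (2*Real.exp (n*Δ^2) - 2*Real.exp (-(n*Δ^2)) + 1)/4
      ≤ ((Measure.pi fun _ : Fin n => gaussianReal Δ 1) Sᶜ).toReal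
        + ((Measure.pi fun _ : Fin n => gaussianReal (-Δ) 1) S).toReal := by
  set Φ1 : (Fin n → ℝ) → ℝ := fun y => ∏ i, gaussianPDFReal Δ 1 (y i) with hΦ1
  set Φ2 : (Fin n → ℝ) → ℝ := fun y => ∏ i, gaussianPDFReal (-Δ) 1 (y i) with hΦ2
  set Φ3 : (Fin n → ℝ) → ℝ := fun y => ∏ i, Real.exp (Δ^2) * gaussianPDFReal (2*Δ) 1 (y i) with hΦ3
  set Φ4 : (Fin n → ℝ) → ℝ := fun y => ∏ i, Real.exp (-Δ^2) * gaussianPDFReal 0 1 (y i) with hΦ4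
  set Φ5 : (Fin n → ℝ) → ℝ :=
    fun y => ∏ i, Real.exp ((-Δ)^2) * gaussianPDFReal (2*(-Δ)) 1 (y i) with hΦ5
  set Φ6 : (Fin n → ℝ) → ℝ := fun y => ∏ i, gaussianPDFReal 0 1 (y i) with hΦ6
  have int1 : Integrable Φ1 := integrable_prod_pdf Δ
  have int2 : Integrable Φ2 := integrable_prod_pdf (-Δ)
  have int3 : Integrable Φ3 := integrable_prod_cpdf _ _
  have int4 : Integrable Φ4 := integrable_prod_cpdf _ _
  have int5 : Integrable Φ5 := integrable_prod_cpdf _ _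
  have int6 : Integrable Φ6 := integrable_prod_pdf 0
  have e1 : ((Measure.pi fun _ : Fin n => gaussianReal Δ 1) Sᶜ).toReal
      = ∫ y, Φ1 y * Sᶜ.indicator 1 y := by
    rw [← measureReal_def, ← integral_indicator_one hS.compl, integral_pi_gaussian]
  have e2 : ((Measure.pi fun _ : Fin n => gaussianReal (-Δ) 1) S).toReal
      = ∫ y, Φ2 y * S.indicator 1 y := by
    rw [← measureReal_def, ← integral_indicator_one hS, integral_pi_gaussian]
  have intA : Integrable (fun y => Φ1 y * Sᶜ.indicator 1 y) := by
    refine int1.mono ((meas_prod_pdf Δ).mul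
      (measurable_one.indicator hS.compl)).aestronglyMeasurable (ae_of_all _ fun y => ?_)
    simp only [norm_mul, Real.norm_eq_abs]
    by_cases hy : y ∈ Sᶜ <;>
      simp [Set.indicator_of_mem, Set.indicator_of_notMem, hy, abs_nonneg]
  have intB : Integrable (fun y => Φ2 y * S.indicator 1 y) := by
    refine int2.mono ((meas_prod_pdf (-Δ)).mul
      (measurable_one.indicator hS)).aestronglyMeasurable (ae_of_all _ fun y => ?_)
    simp only [norm_mul, Real.norm_eq_abs]
    by_cases hy : y ∈ S <;>
      simp [Set.indicator_of_mem, Set.indicator_of_notMem, hy, abs_nonneg]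
  have inth : Integrable (fun y => (Φ1 y + Φ2 y)/2 - ((Φ3 y - 2*Φ4 y + Φ5 y) + Φ6 y)/4) :=
    ((int1.add int2).div_const 2).sub
      (((((int3.sub (int4.const_mul 2)).add int5).add int6).div_const 4))
  rw [e1, e2, ← integral_add intA intB]
  have hmono : ∫ y, ((Φ1 y + Φ2 y)/2 - ((Φ3 y - 2*Φ4 y + Φ5 y) + Φ6 y)/4)
      ≤ ∫ y, (Φ1 y * Sᶜ.indicator 1 y + Φ2 y * S.indicator 1 y) := by
    refine integral_mono inth (intA.add intB) fun y => ?_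
    have p6pos : 0 < Φ6 y := Finset.prod_pos fun i _ => gaussianPDFReal_pos 0 1 _ one_ne_zero
    have p1nn : 0 ≤ Φ1 y := Finset.prod_nonneg fun i _ => gaussianPDFReal_nonneg _ _ _
    have p2nn : 0 ≤ Φ2 y := Finset.prod_nonneg fun i _ => gaussianPDFReal_nonneg _ _ _
    have id13 : Φ1 y ^ 2 = Φ3 y * Φ6 y := by
      rw [hΦ1, hΦ3, hΦ6]
      simp only [← Finset.prod_mul_distrib, ← Finset.prod_pow]
      exact Finset.prod_congr rfl fun i _ => pdf_sq Δ (y i)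
    have id14 : Φ1 y * Φ2 y = Φ4 y * Φ6 y := by
      rw [hΦ1, hΦ2, hΦ4, hΦ6]
      simp only [← Finset.prod_mul_distrib]
      exact Finset.prod_congr rfl fun i _ => pdf_mul_neg Δ (y i)
    have id25 : Φ2 y ^ 2 = Φ5 y * Φ6 y := by
      rw [hΦ2, hΦ5, hΦ6]
      simp only [← Finset.prod_mul_distrib, ← Finset.prod_pow]
      exact Finset.prod_congr rfl fun i _ => pdf_sq (-Δ) (y i)
    by_cases hy : y ∈ S
    · rw [Set.indicator_of_mem hy, Set.indicator_of_notMem (by simp [hy])]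
      have key : 0 ≤ (Φ2 y - Φ1 y + Φ6 y)^2 := sq_nonneg _
      simp only [Pi.one_apply, mul_one, mul_zero, zero_add]
      nlinarith [p6pos, key, id13, id14, id25]
    · rw [Set.indicator_of_notMem hy, Set.indicator_of_mem (by simp [hy])]
      have key : 0 ≤ (Φ1 y - Φ2 y + Φ6 y)^2 := sq_nonneg _
      simp only [Pi.one_apply, mul_one, mul_zero, add_zero]
      nlinarith [p6pos, key, id13, id14, id25]
  refine le_trans ?_ hmono
  have ihalf : Integrable (fun y => (Φ1 y + Φ2 y)/2) := (int1.add int2).div_const 2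
  have i4 : Integrable (fun y => 2*Φ4 y) := int4.const_mul 2
  have i34 : Integrable (fun y => Φ3 y - 2*Φ4 y) := int3.sub i4
  have i345 : Integrable (fun y => Φ3 y - 2*Φ4 y + Φ5 y) := i34.add int5
  have i3456 : Integrable (fun y => Φ3 y - 2*Φ4 y + Φ5 y + Φ6 y) := i345.add int6
  have iquar : Integrable (fun y => (Φ3 y - 2*Φ4 y + Φ5 y + Φ6 y)/4) := i3456.div_const 4
  rw [integral_sub ihalf iquar,
    integral_div, integral_div, integral_add int1 int2,
    integral_add i345 int6,
    integral_add i34 int5,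
    integral_sub int3 i4, integral_const_mul,
    hΦ1, hΦ2, hΦ3, hΦ4, hΦ5, hΦ6,
    integral_prod_pdf, integral_prod_pdf, integral_prod_pdf,
    integral_prod_cpdf, integral_prod_cpdf, integral_prod_cpdf]
  have h4 : (n : ℝ) * -Δ^2 = -(n*Δ^2) := by ring
  have h5 : (n : ℝ) * (-Δ)^2 = n*Δ^2 := by ring
  rw [h4, h5]
  exact le_of_eq (by ring)

lemma exp_quarter_bound : Real.exp (1/4) - Real.exp (-(1/4)) ≤ 21/32 := by
  have hsq : Real.exp (1/2) * Real.exp (1/2) = Real.exp 1 := by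
    rw [← Real.exp_add]; norm_num
  have h2 : Real.exp (1/2) ≤ 53/32 := by
    nlinarith [Real.exp_one_lt_d9, Real.exp_pos (1/2 : ℝ)]
  have ha2 : Real.exp (1/4) * Real.exp (1/4) = Real.exp (1/2) := by
    rw [← Real.exp_add]; norm_num
  have ha1 : 1 ≤ Real.exp (1/4) := Real.one_le_exp (by norm_num)
  have hneg : Real.exp (-(1/4)) = (Real.exp (1/4))⁻¹ := Real.exp_neg _
  have hmul : Real.exp (1/4) * (Real.exp (1/4))⁻¹ = 1 :=
    mul_inv_cancel₀ (Real.exp_pos _).ne'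
  have hinv0 : 0 < (Real.exp (1/4))⁻¹ := by positivity
  rw [hneg]
  nlinarith [ha2, ha1, hmul, hinv0, h2]

lemma cAlpha_nonneg {α : ℝ} (hα0 : 0 ≤ α) (hα1 : α < 1) : 0 ≤ cAlpha α := by
  unfold cAlpha
  split_ifs
  · have : (0:ℝ) < 1 - α := by linarith
    positivity
  · positivity

lemma cAlpha_le_half {α : ℝ} (hα0 : 0 ≤ α) (hα1 : α < 1) : cAlpha α ≤ 1/2 := by
  unfold cAlpha
  have h3 : (1:ℝ) ≤ Real.sqrt 3 := by
    nlinarith [Real.sq_sqrt (by norm_num : (0:ℝ) ≤ 3), Real.sqrt_nonneg 3]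
  split_ifs with h
  · rw [div_le_iff₀ (by nlinarith : (0:ℝ) < 27*(1-α))]
    nlinarith
  · rw [div_le_iff₀ (by nlinarith : (0:ℝ) < 3*Real.sqrt 3)]
    have : Real.sqrt α ≤ 1 := Real.sqrt_le_one.mpr hα1.le
    nlinarith

lemma cAlpha_key {α : ℝ} (hα0 : 0 ≤ α) (hα1 : α < 1) : 4*cAlpha α*(1-α) ≤ 27/64 := by
  unfold cAlpha
  have h1α : (0:ℝ) < 1 - α := by linarith
  split_ifs with h
  · have e : 4 * (2 / (27 * (1 - α))) * (1 - α) = 8/27 := by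
      field_simp
      ring
    rw [e]; norm_num
  · set s := Real.sqrt α with hs
    set u := Real.sqrt 3 with hu
    have hs0 : 0 ≤ s := Real.sqrt_nonneg _
    have hs2 : s^2 = α := Real.sq_sqrt hα0
    have hs1 : s ≤ 1 := Real.sqrt_le_one.mpr hα1.le
    have hu2 : u^2 = 3 := Real.sq_sqrt (by norm_num)
    have hu0 : 0 < u := Real.sqrt_pos.mpr (by norm_num)
    have hu3 : u^3 = 3*u := by rw [pow_succ, hu2]
    have key : 108*(s*(1-s^2)) ≤ 24*u := by
      nlinarith [mul_nonneg (sq_nonneg (s - u/3)) (by positivity : (0:ℝ) ≤ s + 2*u/3), hu2, hu3]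
    have expand : 4*(s/(3*u))*(1-α) = (4*s*(1-s^2))/(3*u) := by
      rw [← hs2]; ring
    rw [expand, div_le_iff₀ (by positivity)]
    nlinarith [key, hu0.le]

theorem gaussian_mean_estimation_worst_case_cvar
    (n : ℕ) (hn : 1 ≤ n)
    (θ : (Fin n → ℝ) → ℝ) (hθ : Measurable θ)
    (α : ℝ) (hα : α ∈ Set.Ico (0 : ℝ) 1) :
    ((cAlpha α / Real.sqrt n : ℝ) : EReal) ≤
      ⨆ Δ : {Δ : ℝ // 0 < Δ},
        ((⨅ t : ℝ, t + (1 / (1 - α)) *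
            ((1 / 2) * (∫ y, max (min |θ y - Δ.1| (2 * Δ.1) - t) 0
                ∂(Measure.pi fun _ : Fin n => gaussianReal Δ.1 1))
              + (1 / 2) * (∫ y, max (min |θ y + Δ.1| (2 * Δ.1) - t) 0
                ∂(Measure.pi fun _ : Fin n => gaussianReal (-Δ.1) 1))) : ℝ) : EReal) := by
  obtain ⟨hα0, hα1⟩ := hα
  have h1α : (0:ℝ) < 1 - α := by linarith
  have hnR : (0:ℝ) < n := by exact_mod_cast Nat.lt_of_lt_of_le Nat.zero_lt_one hn
  set sn : ℝ := Real.sqrt n with hsn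
  have hsn0 : 0 < sn := Real.sqrt_pos.mpr hnR
  have hsn2 : sn^2 = n := Real.sq_sqrt hnR.le
  set Δ : ℝ := 1/(2*sn) with hΔdef
  have hΔ0 : 0 < Δ := by positivity
  set c : ℝ := cAlpha α with hc
  have hc0 : 0 ≤ c := cAlpha_nonneg hα0 hα1
  have hc12 : c ≤ 1/2 := cAlpha_le_half hα0 hα1
  have hckey : 4*c*(1-α) ≤ 27/64 := cAlpha_key hα0 hα1
  have hΔsn : Δ * sn = 1/2 := by
    rw [hΔdef]; field_simp
  have hcs : c/sn = 2*c*Δ := by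
    rw [hΔdef]; field_simp
  -- the measures
  set Pp : Measure (Fin n → ℝ) := Measure.pi fun _ : Fin n => gaussianReal Δ 1 with hPp
  set Pm : Measure (Fin n → ℝ) := Measure.pi fun _ : Fin n => gaussianReal (-Δ) 1 with hPm
  haveI : IsProbabilityMeasure Pp := by rw [hPp]; infer_instance
  haveI : IsProbabilityMeasure Pm := by rw [hPm]; infer_instance
  set S : Set (Fin n → ℝ) := {y | 0 ≤ θ y} with hSdef
  have hS : MeasurableSet S := measurableSet_le measurable_const hθ
  set p1 : ℝ := (Pp Sᶜ).toReal with hp1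
  set q1 : ℝ := (Pp S).toReal with hq1
  set p2 : ℝ := (Pm S).toReal with hp2
  set q2 : ℝ := (Pm Sᶜ).toReal with hq2
  have hp1nn : 0 ≤ p1 := ENNReal.toReal_nonneg
  have hp2nn : 0 ≤ p2 := ENNReal.toReal_nonneg
  have hq1nn : 0 ≤ q1 := ENNReal.toReal_nonneg
  have hq2nn : 0 ≤ q2 := ENNReal.toReal_nonneg
  have hsum1 : q1 + p1 = 1 := by
    rw [hq1, hp1, ← ENNReal.toReal_add (measure_ne_top _ _) (measure_ne_top _ _),
      measure_add_measure_compl hS]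
    simp
  have hsum2 : p2 + q2 = 1 := by
    rw [hp2, hq2, ← ENNReal.toReal_add (measure_ne_top _ _) (measure_ne_top _ _),
      measure_add_measure_compl hS]
    simp
  -- overlap bound
  have hnd2 : (n:ℝ)*Δ^2 = 1/4 := by
    have hq : Δ^2 = 1/(4*(n:ℝ)) := by
      rw [hΔdef, div_pow, one_pow, mul_pow, hsn2]
      norm_num
    rw [hq, mul_one_div, div_eq_div_iff (by positivity) (by norm_num)]
    ring
  have hω : (27:ℝ)/64 ≤ p1 + p2 := by
    have h := overlap_bound n Δ S hS
    rw [hnd2] at h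
    have := exp_quarter_bound
    rw [← hPp, ← hPm, ← hp1, ← hp2] at h
    linarith only [h, this]
  have hωkey : 4*c*(1-α) ≤ p1 + p2 := by linarith
  -- main bound for each t
  have key : ∀ t : ℝ, c / sn ≤ t + (1 / (1 - α)) *
      ((1 / 2) * (∫ y, max (min |θ y - Δ| (2 * Δ) - t) 0 ∂Pp)
        + (1 / 2) * (∫ y, max (min |θ y + Δ| (2 * Δ) - t) 0 ∂Pm)) := by
    intro t
    set A : ℝ := ∫ y, max (min |θ y - Δ| (2 * Δ) - t) 0 ∂Pp with hA
    set B : ℝ := ∫ y, max (min |θ y + Δ| (2 * Δ) - t) 0 ∂Pm with hB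
    have hmeasA : Measurable fun y => max (min |θ y - Δ| (2*Δ) - t) 0 :=
      (((hθ.sub_const Δ).abs.min measurable_const).sub_const t).max measurable_const
    have hmeasB : Measurable fun y => max (min |θ y + Δ| (2*Δ) - t) 0 :=
      (((hθ.add_const Δ).abs.min measurable_const).sub_const t).max measurable_const
    have hintA : Integrable (fun y => max (min |θ y - Δ| (2*Δ) - t) 0) Pp := by
      refine (integrable_const (max (2*Δ - t) 0)).mono'
        hmeasA.aestronglyMeasurable (ae_of_all _ fun y => ?_)
      rw [Real.norm_eq_abs, abs_of_nonneg (le_max_right _ _)]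
      exact max_le_max (sub_le_sub_right (min_le_right _ _) t) le_rfl
    have hintB : Integrable (fun y => max (min |θ y + Δ| (2*Δ) - t) 0) Pm := by
      refine (integrable_const (max (2*Δ - t) 0)).mono'
        hmeasB.aestronglyMeasurable (ae_of_all _ fun y => ?_)
      rw [Real.norm_eq_abs, abs_of_nonneg (le_max_right _ _)]
      exact max_le_max (sub_le_sub_right (min_le_right _ _) t) le_rfl
    have hA0 : 0 ≤ A := integral_nonneg fun y => le_max_right _ _
    have hB0 : 0 ≤ B := integral_nonneg fun y => le_max_right _ _
    -- pointwise bounds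
    have hlowA : ∀ y, y ∈ Sᶜ → Δ ≤ min |θ y - Δ| (2*Δ) := by
      intro y hy
      simp only [hSdef, Set.mem_compl_iff, Set.mem_setOf_eq, not_le] at hy
      refine le_min ?_ (by linarith)
      calc Δ ≤ Δ - θ y := by linarith
      _ = -(θ y - Δ) := by ring
      _ ≤ |θ y - Δ| := neg_le_abs _
    have hlowB : ∀ y, y ∈ S → Δ ≤ min |θ y + Δ| (2*Δ) := by
      intro y hy
      simp only [hSdef, Set.mem_setOf_eq] at hy
      refine le_min ?_ (by linarith)
      calc Δ ≤ θ y + Δ := by linarith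
      _ ≤ |θ y + Δ| := le_abs_self _
    rcases le_or_gt t 0 with ht0 | ht0
    · -- t ≤ 0 case
      have hAbnd : (Δ - t)*p1 + (-t)*q1 ≤ A := by
        have hint_ind : Integrable (fun y => Sᶜ.indicator (fun _ => Δ - t) y
            + S.indicator (fun _ => -t) y) Pp :=
          ((integrable_const _).indicator hS.compl).add ((integrable_const _).indicator hS)
        have hmono := integral_mono hint_ind hintA (fun y => ?_)
        · rw [integral_add ((integrable_const _).indicator hS.compl)
              ((integrable_const _).indicator hS), integral_indicator_const _ hS.compl,
              integral_indicator_const _ hS, smul_eq_mul, smul_eq_mul] at hmono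
          calc (Δ - t)*p1 + (-t)*q1 = p1 * (Δ - t) + q1 * (-t) := by ring
          _ ≤ A := hmono
        by_cases hy : y ∈ S
        · rw [Set.indicator_of_notMem (by simpa using hy), Set.indicator_of_mem hy, zero_add]
          have : 0 ≤ min |θ y + Δ| (2*Δ) := le_min (abs_nonneg _) (by linarith)
          have h0 : 0 ≤ min |θ y - Δ| (2*Δ) := le_min (abs_nonneg _) (by linarith)
          calc -t ≤ min |θ y - Δ| (2*Δ) - t := by linarith
          _ ≤ max (min |θ y - Δ| (2*Δ) - t) 0 := le_max_left _ _
        · rw [Set.indicator_of_mem (by simpa using hy), Set.indicator_of_notMem hy, add_zero]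
          have := hlowA y (by simpa using hy)
          calc Δ - t ≤ min |θ y - Δ| (2*Δ) - t := by linarith
          _ ≤ max _ 0 := le_max_left _ _
      have hBbnd : (Δ - t)*p2 + (-t)*q2 ≤ B := by
        have hint_ind : Integrable (fun y => S.indicator (fun _ => Δ - t) y
            + Sᶜ.indicator (fun _ => -t) y) Pm :=
          ((integrable_const _).indicator hS).add ((integrable_const _).indicator hS.compl)
        have hmono := integral_mono hint_ind hintB (fun y => ?_)
        · rw [integral_add ((integrable_const _).indicator hS)
              ((integrable_const _).indicator hS.compl), integral_indicator_const _ hS,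
              integral_indicator_const _ hS.compl, smul_eq_mul, smul_eq_mul] at hmono
          calc (Δ - t)*p2 + (-t)*q2 = p2 * (Δ - t) + q2 * (-t) := by ring
          _ ≤ B := hmono
        by_cases hy : y ∈ S
        · rw [Set.indicator_of_mem hy, Set.indicator_of_notMem (by simpa using hy), add_zero]
          have := hlowB y hy
          calc Δ - t ≤ min |θ y + Δ| (2*Δ) - t := by linarith
          _ ≤ max _ 0 := le_max_left _ _
        · rw [Set.indicator_of_notMem hy, Set.indicator_of_mem (by simpa using hy), zero_add]
          have h0 : 0 ≤ min |θ y + Δ| (2*Δ) := le_min (abs_nonneg _) (by linarith)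
          calc -t ≤ min |θ y + Δ| (2*Δ) - t := by linarith
          _ ≤ max (min |θ y + Δ| (2*Δ) - t) 0 := le_max_left _ _
      -- arithmetic
      rw [hcs]
      have hr : (1/(1-α)) * (1-α) = 1 := by field_simp
      have hr0 : 0 < 1/(1-α) := by positivity
      have hr1 : 1 ≤ 1/(1-α) := by
        rw [le_div_iff₀ h1α]; linarith
      have hm : 2*c ≤ (1/(1-α))*(p1+p2)/2 := by
        have h' := mul_le_mul_of_nonneg_left hωkey (by positivity : (0:ℝ) ≤ (1/(1-α))/2)
        have e1 : ((1/(1-α))/2) * (4*c*(1-α)) = 2*c*((1/(1-α))*(1-α)) := by ring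
        rw [e1, hr, mul_one] at h'
        calc 2*c ≤ ((1/(1-α))/2)*(p1+p2) := h'
        _ = (1/(1-α))*(p1+p2)/2 := by ring
      have hsplit1 : (Δ - t)*(p1+p2) + (-t)*(q1+q2)
          = ((Δ-t)*p1 + (-t)*q1) + ((Δ-t)*p2 + (-t)*q2) := by ring
      have hAB : (Δ - t)*(p1+p2) + (-t)*(q1+q2) ≤ A + B := by
        rw [hsplit1]; linarith
      have hq12 : q1 + q2 = 2 - (p1+p2) := by linarith
      have step : t + (1/(1-α))*((Δ-t)*(p1+p2)/2 + (-t)*(2-(p1+p2))/2)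
          ≤ t + (1/(1-α))*((1/2)*A + (1/2)*B) := by
        have hh : (Δ-t)*(p1+p2)/2 + (-t)*(2-(p1+p2))/2 ≤ (1/2)*A + (1/2)*B := by
          rw [← hq12]; linarith
        have := mul_le_mul_of_nonneg_left hh hr0.le
        linarith
      have expand : t + (1/(1-α))*((Δ-t)*(p1+p2)/2 + (-t)*(2-(p1+p2))/2)
          = t*(1 - (1/(1-α))) + ((1/(1-α))*(p1+p2)/2)*Δ := by ring
      have term1 : 0 ≤ t*(1 - (1/(1-α))) := by
        have h1 : 1 - (1/(1-α)) ≤ 0 := by linarith only [hr1]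
        have := mul_nonneg (neg_nonneg.mpr ht0) (neg_nonneg.mpr h1)
        calc (0:ℝ) ≤ (-t) * (-(1 - (1/(1-α)))) := this
        _ = t*(1 - (1/(1-α))) := by ring
      have term2 : 2*c*Δ ≤ ((1/(1-α))*(p1+p2)/2)*Δ := mul_le_mul_of_nonneg_right hm hΔ0.le
      linarith only [step, expand, term1, term2]
    · rcases le_total t Δ with htΔ | htΔ
      · -- 0 < t ≤ Δ
        have hAbnd : (Δ - t)*p1 ≤ A := by
          have hint_ind : Integrable (fun y => Sᶜ.indicator (fun _ => Δ - t) y) Pp :=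
            (integrable_const _).indicator hS.compl
          have hmono := integral_mono hint_ind hintA (fun y => ?_)
          · rw [integral_indicator_const _ hS.compl, smul_eq_mul] at hmono
            calc (Δ - t)*p1 = p1 * (Δ - t) := by ring
            _ ≤ A := hmono
          by_cases hy : y ∈ Sᶜ
          · rw [Set.indicator_of_mem hy]
            have := hlowA y hy
            calc Δ - t ≤ min |θ y - Δ| (2*Δ) - t := by linarith
            _ ≤ max _ 0 := le_max_left _ _
          · rw [Set.indicator_of_notMem hy]
            exact le_max_right _ _
        have hBbnd : (Δ - t)*p2 ≤ B := by
          have hint_ind : Integrable (fun y => S.indicator (fun _ => Δ - t) y) Pm :=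
            (integrable_const _).indicator hS
          have hmono := integral_mono hint_ind hintB (fun y => ?_)
          · rw [integral_indicator_const _ hS, smul_eq_mul] at hmono
            calc (Δ - t)*p2 = p2 * (Δ - t) := by ring
            _ ≤ B := hmono
          by_cases hy : y ∈ S
          · rw [Set.indicator_of_mem hy]
            have := hlowB y hy
            calc Δ - t ≤ min |θ y + Δ| (2*Δ) - t := by linarith
            _ ≤ max _ 0 := le_max_left _ _
          · rw [Set.indicator_of_notMem hy]
            exact le_max_right _ _
        rw [hcs]
        have hr : (1/(1-α)) * (1-α) = 1 := by field_simp
        have hr0 : 0 < 1/(1-α) := by positivity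
        set m : ℝ := (1/(1-α))*(p1+p2)/2 with hmdef
        have hm : 2*c ≤ m := by
          have h' := mul_le_mul_of_nonneg_left hωkey (by positivity : (0:ℝ) ≤ (1/(1-α))/2)
          have e1 : ((1/(1-α))/2) * (4*c*(1-α)) = 2*c*((1/(1-α))*(1-α)) := by ring
          rw [e1, hr, mul_one] at h'
          calc 2*c ≤ ((1/(1-α))/2)*(p1+p2) := h'
          _ = m := by rw [hmdef]; ring
        have hsplit1 : (Δ - t)*(p1+p2) = (Δ-t)*p1 + (Δ-t)*p2 := by ring
        have step : t + (1/(1-α))*((Δ-t)*(p1+p2)/2)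
            ≤ t + (1/(1-α))*((1/2)*A + (1/2)*B) := by
          have hh : (Δ-t)*(p1+p2)/2 ≤ (1/2)*A + (1/2)*B := by
            rw [hsplit1] at *
            linarith
          have := mul_le_mul_of_nonneg_left hh hr0.le
          linarith
        have expand : t + (1/(1-α))*((Δ-t)*(p1+p2)/2) = t*(1-m) + Δ*m := by
          rw [hmdef]; ring
        rcases le_total (p1 + p2) (2*(1-α)) with hw | hw
        · have hm1 : m ≤ 1 := by
            have h' := mul_le_mul_of_nonneg_left hw (by positivity : (0:ℝ) ≤ (1/(1-α))/2)
            have e1 : ((1/(1-α))/2) * (2*(1-α)) = (1/(1-α))*(1-α) := by ring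
            rw [e1, hr] at h'
            calc m = ((1/(1-α))/2)*(p1+p2) := by rw [hmdef]; ring
            _ ≤ 1 := h'
          have term1 : 0 ≤ t*(1-m) := mul_nonneg ht0.le (by linarith only [hm1])
          have term2 : 2*c*Δ ≤ Δ*m := by
            have h'' := mul_le_mul_of_nonneg_left hm hΔ0.le
            calc 2*c*Δ = Δ*(2*c) := by ring
            _ ≤ Δ*m := h''
          linarith only [step, expand, term1, term2]
        · have hm1 : 1 ≤ m := by
            have h' := mul_le_mul_of_nonneg_left hw (by positivity : (0:ℝ) ≤ (1/(1-α))/2)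
            have e1 : ((1/(1-α))/2) * (2*(1-α)) = (1/(1-α))*(1-α) := by ring
            rw [e1, hr] at h'
            calc (1:ℝ) ≤ ((1/(1-α))/2)*(p1+p2) := h'
            _ = m := by rw [hmdef]; ring
          have term1 : 0 ≤ (m-1)*(Δ-t) := mul_nonneg (by linarith only [hm1]) (by linarith only [htΔ])
          have expand2 : t*(1-m) + Δ*m = Δ + (m-1)*(Δ-t) := by ring
          have term2 : 2*c*Δ ≤ Δ := by
            calc 2*c*Δ ≤ 1*Δ := mul_le_mul_of_nonneg_right (by linarith only [hc12]) hΔ0.le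
            _ = Δ := one_mul Δ
          linarith only [step, expand, expand2, term1, term2]
      · -- t ≥ Δ
        have hcsΔ : c / sn ≤ Δ := by
          rw [hcs]
          calc 2*c*Δ ≤ 1*Δ := mul_le_mul_of_nonneg_right (by linarith only [hc12]) hΔ0.le
          _ = Δ := one_mul Δ
        have hpos : 0 ≤ (1 / (1 - α)) * ((1/2)*A + (1/2)*B) := by
          have hr0 : (0:ℝ) ≤ 1/(1-α) := by positivity
          have : (0:ℝ) ≤ (1/2)*A + (1/2)*B := by linarith only [hA0, hB0]
          exact mul_nonneg hr0 this
        linarith only [hcsΔ, hpos, htΔ]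
  exact le_iSup_of_le ⟨Δ, hΔ0⟩ (EReal.coe_le_coe_iff.mpr (le_ciInf key))
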